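/- Let M = {pₙ : n ∈ ℕ} be a pointed metric space with metric d(pₙ, pₘ) = L + φ(n,m) for n ≠ m, where L > 0 and φ : ℕ² → ℝ is symmetric and satisfies: (i) ψ(n) := limₘ φ(n,m) exists for all n; (ii) φ(n,m) > ψ(n) + ψ(m) for all n ≠ m; (iii) liminf over distinct pairs (n,m) of φ(n,m) is ≥ 0. Then F(M) does not contain an isometric copy of ℓ₁. -/

import Mathlib

open Filter Metric MeasureTheory

noncomputable def lipNorm {M : Type*} [MetricSpace M] (f : M → ℝ) : ℝ :=
  sSup {r : ℝ | ∃ p q : M, p ≠ q ∧ r = |f q - f p| / dist p q}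

noncomputable def pnormAt {M : Type*} [MetricSpace M] (f : M → ℝ) (p : M) : ℝ :=
  sSup {r : ℝ | ∃ q : M, q ≠ p ∧ r = |f q - f p| / dist p q}

/-- `f` strongly attains its (Lipschitz) norm. -/
def StronglyAttains {M : Type*} [MetricSpace M] (f : M → ℝ) : Prop :=
  ∃ p q : M, p ≠ q ∧ |f q - f p| / dist p q = lipNorm f

/-- `f` attains its pointwise norm. -/
def PointwiseAttains {M : Type*} [MetricSpace M] (f : M → ℝ) : Prop :=
  ∃ p : M, pnormAt f p = lipNorm f

/-- for M = {pₙ} with d(pₙ,pₘ) = L + φ(n,m), under (i)–(iii) the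
Lipschitz-free space F(M) contains no isometric copy of ℓ₁; via the
Ostrovska–Ostrovskii characterization this means: there is no sequence of pairwise
disjoint pairs (uₙ,vₙ) of distinct points of M such that every finite sub-collection
is a minimum-weight perfect matching (Σ d(uᵢ,vᵢ) ≤ Σ d(uᵢ,v_{σ(i)}) for all
permutations σ). -/
theorem stmt12 {M : Type*} [MetricSpace M]
    (p : ℕ → M) (hinj : Function.Injective p) (hsurj : ∀ x : M, ∃ n, x = p n)
    (L : ℝ) (hL : 0 < L) (φ : ℕ → ℕ → ℝ) (ψ : ℕ → ℝ)
    (hsymm : ∀ n m, φ n m = φ m n)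
    (hdist : ∀ n m, n ≠ m → dist (p n) (p m) = L + φ n m)
    (hψ : ∀ n, Tendsto (fun m => φ n m) atTop (nhds (ψ n)))
    (hgt : ∀ n m, n ≠ m → ψ n + ψ m < φ n m)
    (hliminf : ∀ ε > (0:ℝ), {x : ℕ × ℕ | x.1 ≠ x.2 ∧ φ x.1 x.2 < -ε}.Finite) :
    ¬ ∃ u v : ℕ → M, (∀ n, u n ≠ v n) ∧
      (∀ n m, n ≠ m → u n ≠ u m ∧ u n ≠ v m ∧ v n ≠ v m ∧ v n ≠ u m) ∧
      (∀ (N : ℕ) (σ : Equiv.Perm (Fin N)),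
        (∑ i : Fin N, dist (u i.1) (v i.1)) ≤ ∑ i : Fin N, dist (u i.1) (v (σ i).1)) := by

  rintro ⟨u, v, huv, hdisj, hperm⟩
  choose a ha using fun n => hsurj (u n)
  choose b hb using fun n => hsurj (v n)
  have hab : ∀ n m, a n ≠ b m := by
    intro n m h
    have huvnm : u n = v m := by rw [ha, hb, h]
    rcases eq_or_ne n m with rfl | hnm
    · exact huv n huvnm
    · exact (hdisj n m hnm).2.1 huvnm
  have ha_inj : Function.Injective a := by
    intro n m h
    by_contra hnm
    exact (hdisj n m hnm).1 (by rw [ha, ha, h])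
  have hb_inj : Function.Injective b := by
    intro n m h
    by_contra hnm
    exact (hdisj n m hnm).2.2.1 (by rw [hb, hb, h])
  -- the key matching inequality from the two-element swap
  have key : ∀ m, m ≠ 0 →
      φ (a 0) (b 0) + φ (a m) (b m) ≤ φ (a 0) (b m) + φ (a m) (b 0) := by
    intro m hm
    set i0 : Fin (m+1) := ⟨0, Nat.succ_pos m⟩ with hi0
    set im : Fin (m+1) := ⟨m, Nat.lt_succ_self m⟩ with him
    have hne : i0 ≠ im := by
      simp only [hi0, him, Fin.mk.injEq, ne_eq]
      omega
    set σ : Equiv.Perm (Fin (m+1)) := Equiv.swap i0 im with hσ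
    have h := hperm (m+1) σ
    set g : Fin (m+1) → ℝ :=
      fun i => dist (u i.1) (v ((σ i).1)) - dist (u i.1) (v i.1) with hg
    have hsum0 : 0 ≤ ∑ i : Fin (m+1), g i := by
      rw [hg, Finset.sum_sub_distrib]
      linarith
    have hvanish : ∀ i ∈ Finset.univ, i ∉ ({i0, im} : Finset (Fin (m+1))) → g i = 0 := by
      intro i _ hi
      simp only [Finset.mem_insert, Finset.mem_singleton, not_or] at hi
      have : σ i = i := Equiv.swap_apply_of_ne_of_ne hi.1 hi.2
      simp [hg, this]
    have hsum_eq : ∑ i : Fin (m+1), g i = g i0 + g im := by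
      rw [← Finset.sum_subset (Finset.subset_univ ({i0, im} : Finset (Fin (m+1)))) hvanish,
        Finset.sum_pair hne]
    have hgi0 : g i0 = dist (u 0) (v m) - dist (u 0) (v 0) := by
      simp [hg, hσ, Equiv.swap_apply_left, hi0, him]
    have hgim : g im = dist (u m) (v 0) - dist (u m) (v m) := by
      simp [hg, hσ, Equiv.swap_apply_right, hi0, him]
    have hkey : dist (u 0) (v 0) + dist (u m) (v m) ≤ dist (u 0) (v m) + dist (u m) (v 0) := by
      rw [hsum_eq, hgi0, hgim] at hsum0
      linarith
    have d1 : dist (u 0) (v 0) = L + φ (a 0) (b 0) := by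
      rw [ha, hb]; exact hdist _ _ (hab 0 0)
    have d2 : dist (u m) (v m) = L + φ (a m) (b m) := by
      rw [ha, hb]; exact hdist _ _ (hab m m)
    have d3 : dist (u 0) (v m) = L + φ (a 0) (b m) := by
      rw [ha, hb]; exact hdist _ _ (hab 0 m)
    have d4 : dist (u m) (v 0) = L + φ (a m) (b 0) := by
      rw [ha, hb]; exact hdist _ _ (hab m 0)
    rw [d1, d2, d3, d4] at hkey
    linarith
  -- indices go to infinity
  have ha_top : Tendsto a atTop atTop := by
    rw [← Nat.cofinite_eq_atTop]; exact ha_inj.tendsto_cofinite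
  have hb_top : Tendsto b atTop atTop := by
    rw [← Nat.cofinite_eq_atTop]; exact hb_inj.tendsto_cofinite
  set δ := φ (a 0) (b 0) - ψ (a 0) - ψ (b 0) with hδ
  have hδpos : 0 < δ := by
    have := hgt (a 0) (b 0) (hab 0 0)
    simp only [hδ]; linarith
  have E1 : ∀ᶠ m in atTop, φ (a 0) (b m) < ψ (a 0) + δ/4 := by
    have ht : Tendsto (fun m => φ (a 0) (b m)) atTop (nhds (ψ (a 0))) :=
      (hψ (a 0)).comp hb_top
    exact ht.eventually_lt_const (by linarith)
  have E2 : ∀ᶠ m in atTop, φ (a m) (b 0) < ψ (b 0) + δ/4 := by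
    have ht : Tendsto (fun m => φ (a m) (b 0)) atTop (nhds (ψ (b 0))) := by
      have : (fun m => φ (a m) (b 0)) = fun m => φ (b 0) (a m) := by
        funext m; rw [hsymm]
      rw [this]
      exact (hψ (b 0)).comp ha_top
    exact ht.eventually_lt_const (by linarith)
  have E3 : ∀ᶠ m in atTop, -(δ/4) ≤ φ (a m) (b m) := by
    have hS := hliminf (δ/4) (by linarith)
    have hfinj : Function.Injective (fun m => ((a m, b m) : ℕ × ℕ)) := by
      intro n m h
      exact ha_inj (congrArg Prod.fst h)
    have hfin : {m : ℕ | ((a m, b m) : ℕ × ℕ) ∈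
        {x : ℕ × ℕ | x.1 ≠ x.2 ∧ φ x.1 x.2 < -(δ/4)}}.Finite :=
      hS.preimage (fun x _ y _ h => hfinj h)
    have := hfin.eventually_cofinite_notMem
    rw [Nat.cofinite_eq_atTop] at this
    filter_upwards [this] with m hmem
    simp only [Set.mem_setOf_eq, not_and, not_lt] at hmem
    exact hmem (hab m m)
  obtain ⟨m, h1, h2, h3, h4⟩ := (E1.and (E2.and (E3.and (eventually_ne_atTop 0)))).exists
  have := key m h4
  simp only [hδ] at *
  linarith
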